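/- Let Π.φ be a QCNF and let l_e be an existential literal and l_u a universal literal with l_e < l_u such that l_e and l_u lie in the same strongly connected component of the binary implication graph G_φ (i.e. G_φ has a path from l_e to l_u and a path from l_u to l_e). Then Π.φ has a QU-resolution refutation. -/

import Mathlib

/-!
Framework for prenex QCNF: variables are natural numbers; a quantifier prefix is
given by `ex : Var → Bool` (`ex v = true` iff variable `v` is existential), and
the prefix order on variables (hence on literals) is `<` on ℕ.
-/

abbrev Var := ℕ

/-- A literal: a variable together with a polarity (`pos = true` for `x`, `false` for `x̄`). -/
structure Lit where
  var : Var
  pos : Bool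
deriving DecidableEq

/-- The complementary literal. -/
def Lit.neg (l : Lit) : Lit := ⟨l.var, !l.pos⟩

/-- Clauses (disjunctions) and terms (conjunctions) are finite sets of literals. -/
abbrev Clause := Finset Lit
abbrev Term := Finset Lit

/-- A set of literals contains no complementary pair. -/
def LitSetOk (C : Finset Lit) : Prop := ∀ l ∈ C, l.neg ∉ C

instance (C : Finset Lit) : Decidable (LitSetOk C) :=
  inferInstanceAs (Decidable (∀ l ∈ C, l.neg ∉ C))

/-- The resOf on pivot literal `p` (used both for clauses and for terms). -/
def resOf (p : Lit) (A B : Finset Lit) : Finset Lit := A.erase p ∪ B.erase p.neg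

/-- Resolution of `A` (containing `p`) with `B` (containing `p.neg`) is defined: the
union of the side literals contains no complementary pair and neither `p` nor `p.neg`. -/
def ResOk (p : Lit) (A B : Finset Lit) : Prop :=
  p ∈ A ∧ p.neg ∈ B ∧ p ∉ resOf p A B ∧ p.neg ∉ resOf p A B ∧
    LitSetOk (resOf p A B)

instance (p : Lit) (A B : Finset Lit) : Decidable (ResOk p A B) :=
  inferInstanceAs (Decidable (p ∈ A ∧ p.neg ∈ B ∧ p ∉ resOf p A B ∧
    p.neg ∉ resOf p A B ∧ LitSetOk (resOf p A B)))

/-- ∀-reduction: `C'` results from `C` by removing every universal literal `l` such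
that no existential literal `k ∈ C` satisfies `l < k`. -/
def IsForallReduct (ex : Var → Bool) (C C' : Clause) : Prop :=
  ∀ l : Lit, l ∈ C' ↔ l ∈ C ∧ (ex l.var = true ∨ ∃ k ∈ C, ex k.var = true ∧ l.var < k.var)

/-- QU-resolution proofs of a clause from the matrix `φ` under the prefix `ex`:
every clause is in `φ`, or a QU-resOf of two earlier clauses (the pivot may be
universal), or results from an earlier clause by ∀-reduction. -/
inductive QUProof (ex : Var → Bool) (φ : Finset Clause) : Clause → Prop
  | ax {C : Clause} : C ∈ φ → QUProof ex φ C
  | res {A B : Clause} {p : Lit} : QUProof ex φ A → QUProof ex φ B → ResOk p A B →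
      QUProof ex φ (resOf p A B)
  | red {C C' : Clause} : QUProof ex φ C → IsForallReduct ex C C' → QUProof ex φ C'

/-- ∃-reduction: `T'` results from `T` by removing every existential literal `l` such
that no universal literal `k ∈ T` satisfies `l < k`. -/
def IsExistsReduct (ex : Var → Bool) (T T' : Term) : Prop :=
  ∀ l : Lit, l ∈ T' ↔ l ∈ T ∧ (ex l.var = false ∨ ∃ k ∈ T, ex k.var = false ∧ l.var < k.var)

/-- Model generation rule: `T` is generated from the matrix `φ` if every clause of `φ`
contains a literal belonging to `T`. -/
def ModelGen (φ : Finset Clause) (T : Term) : Prop := ∀ C ∈ φ, ∃ l ∈ C, l ∈ T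

/-- `π` is a term-resolution proof of the term `T` from the QCNF with prefix `ex` and
matrix `φ`: a finite sequence of terms ending in `T`, each generated by model
generation or obtained from earlier terms by ∃-reduction or term-resolution. -/
def IsTermResProof (ex : Var → Bool) (φ : Finset Clause) (π : List Term) (T : Term) : Prop :=
  π ≠ [] ∧ π.getLast? = some T ∧
    ∀ i : Fin π.length, LitSetOk (π.get i) ∧
      (ModelGen φ (π.get i) ∨
        (∃ j : Fin π.length, j < i ∧ IsExistsReduct ex (π.get j) (π.get i)) ∨
        (∃ j k : Fin π.length, j < i ∧ k < i ∧ ∃ p : Lit,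
          ResOk p (π.get j) (π.get k) ∧ π.get i = resOf p (π.get j) (π.get k)))

/-- Value of a literal under a total assignment. -/
def evalLit (σ : Var → Bool) (l : Lit) : Bool := if l.pos then σ l.var else !σ l.var

/-- A strategy assigns to each (existential) variable a Boolean function of the
universal assignment — the semantic counterpart of a propositional formula. -/
abbrev Strategy := Var → (Var → Bool) → Bool

/-- The total assignment induced by a strategy `M` and a universal assignment `τ`. -/
def Strategy.assign (ex : Var → Bool) (M : Strategy) (τ : Var → Bool) : Var → Bool :=
  fun v => if ex v then M v τ else τ v

/-- The definition of each existential variable depends only on the universal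
variables preceding it in the prefix. -/
def WellFormed (ex : Var → Bool) (M : Strategy) : Prop :=
  ∀ e, ex e = true → ∀ τ τ' : Var → Bool,
    (∀ u, ex u = false → u < e → τ u = τ' u) → M e τ = M e τ'

/-- `M` is a model of the QCNF with prefix `ex` and matrix `φ`: it is a well-formed
strategy and `M(φ)` is a tautology. -/
def IsModel (ex : Var → Bool) (φ : Finset Clause) (M : Strategy) : Prop :=
  WellFormed ex M ∧
    ∀ τ : Var → Bool, ∀ C ∈ φ, ∃ l ∈ C, evalLit (Strategy.assign ex M τ) l = true

/-- A term `T` agrees with an assignment `τ` to the universal variables iff there is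
no (universal) literal `l` with `l̄ ∈ T` and `τ(l) = 1`. -/
def Agrees (ex : Var → Bool) (τ : Var → Bool) (T : Term) : Prop :=
  ¬∃ l : Lit, ex l.var = false ∧ l.neg ∈ T ∧ evalLit τ l = true

/-- Edge `a → b` of the binary implication graph of `φ`: the binary clause
`a.neg ∨ b` is in `φ` (a clause `l₁ ∨ l₂` yields the edges `l̄₁ → l₂`, `l̄₂ → l₁`). -/
def ImpEdge (φ : Finset Clause) (a b : Lit) : Prop :=
  a ≠ b ∧ a.neg ≠ b ∧ ({a.neg, b} : Clause) ∈ φ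

/-- The existential literal `l` of the clause `C` is blocked in the matrix `φ`. -/
def BlockedIn (ex : Var → Bool) (φ : Finset Clause) (C : Clause) (l : Lit) : Prop :=
  ex l.var = true ∧ l ∈ C ∧ ∀ D ∈ φ, l.neg ∈ D → ∃ k ∈ C, k.var < l.var ∧ k.neg ∈ D

/-- One step of blocked clause elimination: remove one blocked clause. -/
def BCEStep (ex : Var → Bool) (φ φ' : Finset Clause) : Prop :=
  ∃ C ∈ φ, (∃ l, BlockedIn ex φ C l) ∧ φ' = φ.erase C

/-- The side-condition for eliminating the existential variable `x` from the matrix `φ`. -/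
def VEside (x : Var) (φ : Finset Clause) : Prop :=
  ∀ C ∈ φ, (⟨x, true⟩ : Lit) ∈ C → (∃ k ∈ C, x < k.var) →
    ∀ D ∈ φ, (⟨x, false⟩ : Lit) ∈ D → ∃ z ∈ C, z.var < x ∧ z.neg ∈ D

/-- The set of all defined resolvents on `x` between the clauses of `φ` containing the
literal `x` and those containing `x̄`. -/
def VEresolvents (x : Var) (φ : Finset Clause) : Finset Clause :=
  ((φ ×ˢ φ).filter fun q => ResOk ⟨x, true⟩ q.1 q.2).image
    fun q => resOf ⟨x, true⟩ q.1 q.2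

/-- Variable elimination of `x`: replace all clauses mentioning `x` by all defined
resolvents on `x`. -/
def VEapply (x : Var) (φ : Finset Clause) : Finset Clause :=
  φ.filter (fun C => (⟨x, true⟩ : Lit) ∉ C ∧ (⟨x, false⟩ : Lit) ∉ C) ∪ VEresolvents x φ

/-- The variables of Φₙ (0-indexed): `uᵢ` is variable `2*i`, `eᵢ` is variable `2*i+1`,
so the prefix `∀u₀∃e₀…∀u_{n-1}∃e_{n-1}` is the natural order. -/
def uLit (i : ℕ) (b : Bool) : Lit := ⟨2 * i, b⟩
def eLit (i : ℕ) (b : Bool) : Lit := ⟨2 * i + 1, b⟩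

/-- The prefix of Φₙ: even variables universal, odd variables existential. -/
def phiEx : Var → Bool := fun v => v % 2 == 1

/-- The clause `ūᵢ ∨ eᵢ`. -/
def posClause (i : ℕ) : Clause := {uLit i false, eLit i true}
/-- The clause `uᵢ ∨ ēᵢ`. -/
def negClause (i : ℕ) : Clause := {uLit i true, eLit i false}

/-- The matrix of Φₙ: `⋀_{i<n} (ūᵢ ∨ eᵢ) ∧ (uᵢ ∨ ēᵢ)`. -/
def PhiMatrix (n : ℕ) : Finset Clause :=
  (Finset.range n).biUnion fun i => {posClause i, negClause i}

/-- The set `W` of witnesses for the literal `l` being blocked in the clause `C`. -/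
def witnesses (φ : Finset Clause) (C : Clause) (l : Lit) : Finset Lit :=
  C.filter fun k => k ≠ l ∧ k.var < l.var ∧ ∃ D ∈ φ, k.neg ∈ D ∧ l.neg ∈ D

/-- `φ` with all literals not less than `x` deleted from each clause. -/
def restrictBelow (x : Var) (φ : Finset Clause) : Finset Clause :=
  φ.image fun C => C.filter fun l => l.var < x

lemma Lit.neg_neg (l : Lit) : l.neg.neg = l := by
  cases l with | mk v p => cases p <;> rfl

lemma Lit.neg_ne (l : Lit) : l.neg ≠ l := by
  cases l with | mk v p => cases p <;> simp [Lit.neg]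

lemma Lit.neg_inj {l k : Lit} (h : l.neg = k.neg) : l = k := by
  have := congrArg Lit.neg h
  simpa [Lit.neg_neg] using this

@[simp] lemma Lit.neg_var (l : Lit) : l.neg.var = l.var := rfl

/-- Along a path of the implication graph from `a` to `b`, either we can refute,
or the path revisits `a` (so `a = b`), or we can derive a clause `D` with
`b ∈ D ⊆ {a.neg, b}`. -/
lemma pathClause (ex : Var → Bool) (φ : Finset Clause) (a b : Lit)
    (p : Relation.ReflTransGen (ImpEdge φ) a b) :
    QUProof ex φ ∅ ∨ a = b ∨
      ∃ D : Clause, QUProof ex φ D ∧ b ∈ D ∧ D ⊆ {a.neg, b} ∧ LitSetOk D := by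
  induction p with
  | refl => exact Or.inr (Or.inl rfl)
  | @tail b c hab hbc ih =>
    obtain ⟨hbc1, hbc2, hbc3⟩ := hbc
    rcases ih with h0 | rfl | ⟨D, hD, hbD, hDsub, hDok⟩
    · exact Or.inl h0
    · -- a = b : the edge clause itself works
      refine Or.inr (Or.inr ⟨{a.neg, c}, QUProof.ax hbc3, by simp, Finset.Subset.refl _, ?_⟩)
      intro l hl hnl
      simp only [Finset.mem_insert, Finset.mem_singleton] at hl hnl
      rcases hl with rfl | rfl
      · rw [Lit.neg_neg] at hnl
        rcases hnl with h | h
        · exact Lit.neg_ne _ h.symm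
        · exact hbc1 h
      · rcases hnl with h | h
        · exact hbc1 (Lit.neg_inj h).symm
        · exact Lit.neg_ne _ h
    · by_cases hca : c = a
      · exact Or.inr (Or.inl hca.symm)
      · -- resolve D with the edge clause {b.neg, c} on pivot b
        have hEerase : ({b.neg, c} : Clause).erase b.neg = {c} := by
          rw [Finset.erase_insert]
          simpa using hbc2
        have hmem : ∀ l : Lit, l ∈ resOf b D {b.neg, c} ↔ (l ∈ D ∧ l ≠ b) ∨ l = c := by
          intro l
          simp [resOf, hEerase, Finset.mem_erase, and_comm]
          exact or_comm
        have hsubD : ∀ l : Lit, l ∈ D → l ≠ b → l = a.neg := by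
          intro l hl hlb
          rcases Finset.mem_insert.1 (hDsub hl) with h | h
          · exact h
          · exact absurd (Finset.mem_singleton.1 h) hlb
        have hRsub : ∀ l : Lit, l ∈ resOf b D {b.neg, c} → l = a.neg ∨ l = c := by
          intro l hl
          rcases (hmem l).1 hl with ⟨hl1, hl2⟩ | rfl
          · exact Or.inl (hsubD l hl1 hl2)
          · exact Or.inr rfl
        have hok : ResOk b D {b.neg, c} := by
          refine ⟨hbD, by simp, ?_, ?_, ?_⟩
          · intro h
            rcases (hmem b).1 h with ⟨_, h2⟩ | h2
            · exact h2 rfl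
            · exact hbc1 h2
          · intro h
            rcases (hmem b.neg).1 h with ⟨h1, _⟩ | h2
            · exact hDok b hbD h1
            · exact hbc2 h2
          · intro l hl hnl
            rcases hRsub l hl with rfl | rfl
            · rcases hRsub _ hnl with h | h
              · rw [Lit.neg_neg] at h
                exact Lit.neg_ne _ h.symm
              · rw [Lit.neg_neg] at h
                exact hca h.symm
            · rcases hRsub _ hnl with h | h
              · exact hca (Lit.neg_inj h)
              · exact Lit.neg_ne l h
        refine Or.inr (Or.inr ⟨resOf b D {b.neg, c}, QUProof.res hD (QUProof.ax hbc3) hok,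
          (hmem c).2 (Or.inr rfl), ?_, hok.2.2.2.2⟩)
        intro l hl
        rcases hRsub l hl with rfl | rfl
        · exact Finset.mem_insert_self _ _
        · simp

theorem stmt16 (ex : Var → Bool) (φ : Finset Clause) (hok : ∀ C ∈ φ, LitSetOk C)
    (le lu : Lit) (hle : ex le.var = true) (hlu : ex lu.var = false)
    (hlt : le.var < lu.var)
    (p1 : Relation.ReflTransGen (ImpEdge φ) le lu)
    (p2 : Relation.ReflTransGen (ImpEdge φ) lu le) :
    QUProof ex φ ∅ := by
  have hne : le ≠ lu := fun h => by rw [h] at hlt; exact lt_irrefl _ hlt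
  rcases pathClause ex φ le lu p1 with h0 | h | ⟨D1, hD1, hluD1, hD1sub, _⟩
  · exact h0
  · exact absurd h hne
  rcases pathClause ex φ lu le p2 with h0 | h | ⟨D2, hD2, hleD2, hD2sub, _⟩
  · exact h0
  · exact absurd h.symm hne
  -- ∀-reduce D1 to C1 ⊆ {le.neg} and D2 to C2 = {le}
  set C1 : Clause := D1.filter (fun l => ex l.var = true) with hC1def
  set C2 : Clause := D2.filter (fun l => ex l.var = true) with hC2def
  have hD1mem : ∀ l ∈ D1, l = le.neg ∨ l = lu := by
    intro l hl
    rcases Finset.mem_insert.1 (hD1sub hl) with h | h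
    · exact Or.inl h
    · exact Or.inr (Finset.mem_singleton.1 h)
  have hD2mem : ∀ l ∈ D2, l = lu.neg ∨ l = le := by
    intro l hl
    rcases Finset.mem_insert.1 (hD2sub hl) with h | h
    · exact Or.inl h
    · exact Or.inr (Finset.mem_singleton.1 h)
  have hred1 : IsForallReduct ex D1 C1 := by
    intro l
    simp only [hC1def, Finset.mem_filter]
    constructor
    · rintro ⟨h1, h2⟩; exact ⟨h1, Or.inl h2⟩
    · rintro ⟨h1, h2 | ⟨k, hk, hk1, hk2⟩⟩
      · exact ⟨h1, h2⟩
      · refine ⟨h1, ?_⟩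
        rcases hD1mem k hk with rfl | rfl
        · rcases hD1mem l h1 with rfl | rfl
          · exact hle
          · simp only [Lit.neg_var] at hk2
            exact absurd (hk2.trans hlt) (lt_irrefl _)
        · rw [hlu] at hk1; exact absurd hk1 (by simp)
  have hred2 : IsForallReduct ex D2 C2 := by
    intro l
    simp only [hC2def, Finset.mem_filter]
    constructor
    · rintro ⟨h1, h2⟩; exact ⟨h1, Or.inl h2⟩
    · rintro ⟨h1, h2 | ⟨k, hk, hk1, hk2⟩⟩
      · exact ⟨h1, h2⟩
      · refine ⟨h1, ?_⟩
        rcases hD2mem k hk with rfl | rfl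
        · simp only [Lit.neg_var] at hk1
          rw [hlu] at hk1; exact absurd hk1 (by simp)
        · rcases hD2mem l h1 with rfl | rfl
          · simp only [Lit.neg_var] at hk2
            exact absurd (hlt.trans hk2) (lt_irrefl _)
          · exact hle
  have hC1 : QUProof ex φ C1 := QUProof.red hD1 hred1
  have hC2 : QUProof ex φ C2 := QUProof.red hD2 hred2
  have hC1sub : ∀ l ∈ C1, l = le.neg := by
    intro l hl
    rw [hC1def, Finset.mem_filter] at hl
    rcases hD1mem l hl.1 with rfl | rfl
    · rfl
    · rw [hlu] at hl; exact absurd hl.2 (by simp)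
  have hleC2 : le ∈ C2 := by
    rw [hC2def, Finset.mem_filter]; exact ⟨hleD2, hle⟩
  have hC2eq : C2 = {le} := by
    apply Finset.Subset.antisymm
    · intro l hl
      rw [hC2def, Finset.mem_filter] at hl
      rcases hD2mem l hl.1 with rfl | rfl
      · simp only [Lit.neg_var] at hl
        rw [hlu] at hl; exact absurd hl.2 (by simp)
      · exact Finset.mem_singleton_self _
    · simpa using hleC2
  by_cases hc : le.neg ∈ C1
  · have hC1eq : C1 = {le.neg} := by
      apply Finset.Subset.antisymm
      · intro l hl; simpa using hC1sub l hl
      · simpa using hc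
    have hres : resOf le C2 C1 = ∅ := by
      rw [hC1eq, hC2eq, resOf, Finset.erase_singleton, Finset.erase_singleton]
      simp
    have hrok : ResOk le C2 C1 := by
      refine ⟨hleC2, hc, ?_, ?_, ?_⟩ <;> rw [hres] <;> simp [LitSetOk]
    have := QUProof.res hC2 hC1 hrok
    rwa [hres] at this
  · have : C1 = ∅ := by
      rw [Finset.eq_empty_iff_forall_notMem]
      intro l hl
      exact hc ((hC1sub l hl) ▸ hl)
    rwa [this] at hC1
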